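/- arXiv:1606.04848 — 2 statements merged into one kernel-verified Lean document; each statement's English description precedes it below -/
import Mathlib

section
/- Let a, b, c, d, e, f be six distinct points of ℝ³ such that every 4-element subset of {a, b, c, d, e, f} is affinely independent. If for each edge s of either triangle {a,b,c}, {d,e,f} the relative interior of s is disjoint from the relative interior of the other triangle, then conv{a,b,c} ∩ conv{d,e,f} = ∅. -/
open Finset

local notation "V3" => EuclideanSpace ℝ (Fin 3)

/-! ### Auxiliary lemmas -/

private lemma mem_convexHull_range_iff' {n : ℕ} (p : Fin n → V3) (x : V3) :
    x ∈ convexHull ℝ (Set.range p) ↔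
      ∃ w : Fin n → ℝ, (∀ i, 0 ≤ w i) ∧ ∑ i, w i = 1 ∧ ∑ i, w i • p i = x := by
  rw [convexHull_range_eq_exists_affineCombination]
  constructor
  · rintro ⟨s, w, hw0, hw1, rfl⟩
    refine ⟨fun i => if i ∈ s then w i else 0, fun i => ?_, ?_, ?_⟩
    · dsimp only; split <;> simp_all [hw0]
    · dsimp only; rw [Finset.sum_ite_mem, Finset.univ_inter, hw1]
    · dsimp only
      rw [affineCombination_eq_linear_combination s p w hw1]
      simp only [ite_smul, zero_smul]
      rw [Finset.sum_ite_mem, Finset.univ_inter]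
  · rintro ⟨w, hw0, hw1, rfl⟩
    exact ⟨Finset.univ, w, fun i _ => hw0 i, hw1,
      by rw [affineCombination_eq_linear_combination _ p w hw1]⟩

private lemma mem_intrinsicInterior_of_pos' {n : ℕ} (p : Fin n → V3)
    (hp : AffineIndependent ℝ p) (w : Fin n → ℝ) (hw : ∀ i, 0 < w i)
    (hw1 : ∑ i, w i = 1) :
    ∑ i, w i • p i ∈ intrinsicInterior ℝ (convexHull ℝ (Set.range p)) := by
  rcases Nat.eq_zero_or_pos n with hn | hn
  · subst hn; simp at hw1
  have hne : Nonempty (Fin n) := ⟨⟨0, hn⟩⟩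
  set x := ∑ i, w i • p i with hxdef
  have hx : x ∈ convexHull ℝ (Set.range p) :=
    (mem_convexHull_range_iff' p x).2 ⟨w, fun i => (hw i).le, hw1, rfl⟩
  have hxspan : x ∈ affineSpan ℝ (Set.range p) := convexHull_subset_affineSpan _ hx
  -- the coefficient-reading linear map
  let L : (Fin n → ℝ) →ₗ[ℝ] ℝ × V3 :=
    { toFun := fun g => (∑ i, g i, ∑ i, g i • p i)
      map_add' := by
        intro g h
        simp [Prod.ext_iff, Finset.sum_add_distrib, add_smul]
      map_smul' := by
        intro c g
        simp [Prod.ext_iff, Finset.mul_sum, Finset.smul_sum, smul_smul] }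
  have hker : LinearMap.ker L = ⊥ := by
    rw [LinearMap.ker_eq_bot']
    intro g hg
    have h1 : ∑ i, g i = 0 := congrArg Prod.fst hg
    have h2 : ∑ i, g i • p i = 0 := congrArg Prod.snd hg
    funext i
    exact affineIndependent_iff.1 hp Finset.univ g h1 h2 i (Finset.mem_univ i)
  obtain ⟨K, hK0, hK⟩ := L.exists_antilipschitzWith hker
  obtain ⟨i₀⟩ := hne
  set δ := Finset.univ.inf' ⟨i₀, Finset.mem_univ _⟩ w with hδdef
  have hδ : 0 < δ := (Finset.lt_inf'_iff _).2 fun i _ => hw i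
  have hδle : ∀ i, δ ≤ w i := fun i => Finset.inf'_le _ (Finset.mem_univ i)
  have hKK : (0:ℝ) < (K:ℝ) + 1 := by positivity
  set ε := δ / ((K:ℝ) + 1) with hε
  have hεpos : 0 < ε := div_pos hδ hKK
  have hεK : ((K:ℝ) + 1) * ε = δ := by
    rw [hε, mul_div_cancel₀ _ hKK.ne']
  have key : ∀ z ∈ affineSpan ℝ (Set.range p), dist z x < ε →
      z ∈ convexHull ℝ (Set.range p) := by
    intro z hz hdist
    obtain ⟨u, hu1, hzz⟩ := eq_affineCombination_of_mem_affineSpan_of_fintype hz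
    have hzz' : z = ∑ i, u i • p i := by
      rw [hzz, affineCombination_eq_linear_combination _ p u hu1]
    have e1 : L u = (1, z) := by simp [L, Prod.ext_iff, hu1, hzz'.symm]
    have e2 : L w = (1, x) := by simp [L, Prod.ext_iff, hw1, hxdef]
    have hd : dist u w ≤ (K:ℝ) * dist z x := by
      have := hK.le_mul_dist u w
      rwa [e1, e2, Prod.dist_eq, dist_self, max_eq_right dist_nonneg] at this
    have hd2 : dist u w < δ := by
      have h3 : (K:ℝ) * dist z x ≤ (K:ℝ) * ε :=
        mul_le_mul_of_nonneg_left hdist.le K.coe_nonneg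
      have : (K:ℝ) * ε = δ - ε := by linarith [hεK]
      linarith
    refine (mem_convexHull_range_iff' p z).2 ⟨u, fun i => ?_, hu1, hzz'.symm⟩
    have h4 : dist (u i) (w i) ≤ dist u w := dist_le_pi_dist u w i
    rw [Real.dist_eq] at h4
    have h5 : w i - u i ≤ |u i - w i| := by
      rw [abs_sub_comm]; exact le_abs_self _
    have := hδle i
    linarith
  rw [mem_intrinsicInterior]
  have hsp : affineSpan ℝ ((convexHull ℝ) (Set.range p)) = affineSpan ℝ (Set.range p) :=
    affineSpan_convexHull _
  rw [hsp]
  refine ⟨⟨x, hxspan⟩, ?_, rfl⟩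
  rw [mem_interior]
  refine ⟨Subtype.val ⁻¹' Metric.ball x ε,
    fun z hz => key z.1 z.2 (by simpa [Metric.mem_ball] using hz),
    Metric.isOpen_ball.preimage continuous_subtype_val, ?_⟩
  simp [Metric.mem_ball, hεpos]

private lemma openSegment_subset_intrinsicInterior' {p q : V3} (h : p ≠ q) :
    openSegment ℝ p q ⊆ intrinsicInterior ℝ (segment ℝ p q) := by
  rintro x ⟨u, v, hu, hv, huv, rfl⟩
  rw [← convexHull_pair]
  have hr : ({p, q} : Set V3) = Set.range ![p, q] := by
    ext y; simp [or_comm]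
  rw [hr]
  have hx := mem_intrinsicInterior_of_pos' ![p, q] (affineIndependent_of_ne ℝ h)
    ![u, v] (fun i => by fin_cases i <;> simpa) (by simp [Fin.sum_univ_two, huv])
  simpa [Fin.sum_univ_two] using hx

/-! ### The combinatorial dependency engine -/

private lemma dep_core (P : Fin 6 → V3)
    (hgen : ∀ s : Finset (Fin 6), s.card = 4 →
      AffineIndependent ℝ (fun i : s => P i.1))
    (w1 w2 : Fin 6 → ℝ)
    (h1sup : ∀ i : Fin 6, 3 ≤ i.1 → w1 i = 0)
    (h2sup : ∀ i : Fin 6, i.1 < 3 → w2 i = 0)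
    (hs1 : ∑ i, w1 i = 1) (hs2 : ∑ i, w2 i = 1)
    (heq : ∑ i, w1 i • P i = ∑ i, w2 i • P i)
    (s : Finset (Fin 6)) (hcard : s.card = 4)
    (hout : ∀ i ∉ s, w1 i = 0 ∧ w2 i = 0) : False := by
  have hAI := hgen s hcard
  set u : Fin 6 → ℝ := fun i => w1 i - w2 i with hu
  have huout : ∀ i ∉ s, u i = 0 := by
    intro i hi; obtain ⟨h1, h2⟩ := hout i hi; simp [hu, h1, h2]
  have hsum : ∑ i : s, u i.1 = 0 := by
    rw [Finset.sum_coe_sort s (fun i => u i)]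
    rw [Finset.sum_subset (Finset.subset_univ s) (fun i _ hi => huout i hi)]
    simp [hu, Finset.sum_sub_distrib, hs1, hs2]
  have hcomb : ∑ i : s, u i.1 • P i.1 = 0 := by
    rw [Finset.sum_coe_sort s (fun i => u i • P i)]
    rw [Finset.sum_subset (Finset.subset_univ s)
      (fun i _ hi => by rw [huout i hi, zero_smul])]
    simp [hu, sub_smul, Finset.sum_sub_distrib, heq]
  have hz : ∀ i : s, u i.1 = 0 := by
    intro i
    exact affineIndependent_iff.1 hAI Finset.univ (fun i : s => u i.1)
      hsum hcomb i (Finset.mem_univ i)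
  have hzz : ∀ i, u i = 0 := by
    intro i
    by_cases hi : i ∈ s
    · exact hz ⟨i, hi⟩
    · exact huout i hi
  have hw12 : ∀ i, w1 i = w2 i := fun i => by
    have := hzz i; simp [hu] at this; linarith
  have hall : ∀ i, w1 i = 0 := by
    intro i
    by_cases hi : i.1 < 3
    · rw [hw12 i]; exact h2sup i hi
    · exact h1sup i (by omega)
  rw [Finset.sum_congr rfl (fun i _ => hall i)] at hs1
  simp at hs1

private lemma dep_pair (P : Fin 6 → V3)
    (hgen : ∀ s : Finset (Fin 6), s.card = 4 →
      AffineIndependent ℝ (fun i : s => P i.1))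
    (w1 w2 : Fin 6 → ℝ)
    (h1sup : ∀ i : Fin 6, 3 ≤ i.1 → w1 i = 0)
    (h2sup : ∀ i : Fin 6, i.1 < 3 → w2 i = 0)
    (hs1 : ∑ i, w1 i = 1) (hs2 : ∑ i, w2 i = 1)
    (heq : ∑ i, w1 i • P i = ∑ i, w2 i • P i)
    (i6 j6 : Fin 6) (hi6 : i6.1 < 3) (hj6 : 3 ≤ j6.1)
    (hz1 : w1 i6 = 0) (hz2 : w2 j6 = 0) : False := by
  have hji : j6 ≠ i6 := by
    rw [Fin.ne_iff_vne]; omega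
  refine dep_core P hgen w1 w2 h1sup h2sup hs1 hs2 heq
    ((Finset.univ.erase i6).erase j6) ?_ ?_
  · rw [Finset.card_erase_of_mem (Finset.mem_erase.2 ⟨hji, Finset.mem_univ _⟩),
      Finset.card_erase_of_mem (Finset.mem_univ _)]
    simp
  · intro k hk
    simp only [Finset.mem_erase, Finset.mem_univ, and_true, not_and, not_not] at hk
    by_cases hkj : k = j6
    · exact hkj ▸ ⟨h1sup j6 hj6, hz2⟩
    · have hki : k = i6 := by tauto
      exact hki ▸ ⟨hz1, h2sup i6 hi6⟩

private lemma dep_vertexL (P : Fin 6 → V3)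
    (hgen : ∀ s : Finset (Fin 6), s.card = 4 →
      AffineIndependent ℝ (fun i : s => P i.1))
    (k6 : Fin 6) (hk : k6.1 < 3) (w2 : Fin 6 → ℝ)
    (h2sup : ∀ i : Fin 6, i.1 < 3 → w2 i = 0)
    (hs2 : ∑ i, w2 i = 1)
    (heq : P k6 = ∑ i, w2 i • P i) : False := by
  refine dep_core P hgen (fun m => if m = k6 then 1 else 0) w2
    (fun i hi => by simp; rintro rfl; omega) h2sup (by simp) hs2 (by simpa [ite_smul])
    (insert k6 {3, 4, 5}) ?_ ?_
  · rw [Finset.card_insert_of_notMem]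
    · rfl
    · simp only [Finset.mem_insert, Finset.mem_singleton]
      rintro (rfl | rfl | rfl) <;> omega
  · intro m hm
    simp only [Finset.mem_insert, Finset.mem_singleton] at hm
    push_neg at hm
    obtain ⟨hmk, hm3, hm4, hm5⟩ := hm
    have hlt : m.1 < 3 := by
      have h6 := m.isLt
      rw [Fin.ne_iff_vne, show ((3 : Fin 6) : ℕ) = 3 from rfl] at hm3
      rw [Fin.ne_iff_vne, show ((4 : Fin 6) : ℕ) = 4 from rfl] at hm4
      rw [Fin.ne_iff_vne, show ((5 : Fin 6) : ℕ) = 5 from rfl] at hm5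
      omega
    exact ⟨by simp [hmk], h2sup m hlt⟩

private lemma dep_vertexR (P : Fin 6 → V3)
    (hgen : ∀ s : Finset (Fin 6), s.card = 4 →
      AffineIndependent ℝ (fun i : s => P i.1))
    (k6 : Fin 6) (hk : 3 ≤ k6.1) (w1 : Fin 6 → ℝ)
    (h1sup : ∀ i : Fin 6, 3 ≤ i.1 → w1 i = 0)
    (hs1 : ∑ i, w1 i = 1)
    (heq : P k6 = ∑ i, w1 i • P i) : False := by
  refine dep_core P hgen w1 (fun m => if m = k6 then 1 else 0)
    h1sup (fun i hi => by simp; rintro rfl; omega) hs1 (by simp)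
    (by simpa [ite_smul] using heq.symm)
    (insert k6 {0, 1, 2}) ?_ ?_
  · rw [Finset.card_insert_of_notMem]
    · rfl
    · simp only [Finset.mem_insert, Finset.mem_singleton]
      rintro (rfl | rfl | rfl) <;> omega
  · intro m hm
    simp only [Finset.mem_insert, Finset.mem_singleton] at hm
    push_neg at hm
    obtain ⟨hmk, hm0, hm1, hm2⟩ := hm
    have hge : 3 ≤ m.1 := by
      have h6 := m.isLt
      rw [Fin.ne_iff_vne, show ((0 : Fin 6) : ℕ) = 0 from rfl] at hm0
      rw [Fin.ne_iff_vne, show ((1 : Fin 6) : ℕ) = 1 from rfl] at hm1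
      rw [Fin.ne_iff_vne, show ((2 : Fin 6) : ℕ) = 2 from rfl] at hm2
      omega
    exact ⟨h1sup m hge, by simp [hmk]⟩

private lemma indep_triple (P : Fin 6 → V3)
    (hgen : ∀ s : Finset (Fin 6), s.card = 4 →
      AffineIndependent ℝ (fun i : s => P i.1))
    (g : Fin 3 → Fin 6) (hg : Function.Injective g) :
    AffineIndependent ℝ (P ∘ g) := by
  have hcard3 : (Finset.univ.image g).card = 3 := by
    rw [Finset.card_image_of_injective _ hg]; simp
  obtain ⟨s, hsub, -, hcard⟩ := Finset.exists_subsuperset_card_eq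
    (Finset.subset_univ (Finset.univ.image g)) (n := 4) (by omega) (by simp)
  have hAI := hgen s hcard
  have he : Function.Injective
      (fun i : Fin 3 => (⟨g i, hsub (Finset.mem_image_of_mem g (Finset.mem_univ i))⟩ : s)) := by
    intro i j hij
    exact hg (congrArg Subtype.val hij)
  exact hAI.comp_embedding ⟨_, he⟩

/-! ### Index plumbing between `Fin 3` and `Fin 6` -/

private def cL (i : Fin 3) : Fin 6 := ⟨i.1, by have := i.isLt; omega⟩
private def cR (i : Fin 3) : Fin 6 := ⟨i.1 + 3, by have := i.isLt; omega⟩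

private lemma evalL (w : Fin 3 → ℝ) (i : Fin 3) :
    (![w 0, w 1, w 2, 0, 0, 0] : Fin 6 → ℝ) (cL i) = w i := by fin_cases i <;> rfl

private lemma evalR (w : Fin 3 → ℝ) (i : Fin 3) :
    (![0, 0, 0, w 0, w 1, w 2] : Fin 6 → ℝ) (cR i) = w i := by fin_cases i <;> rfl

private lemma supL (w : Fin 3 → ℝ) :
    ∀ i : Fin 6, 3 ≤ i.1 → (![w 0, w 1, w 2, 0, 0, 0] : Fin 6 → ℝ) i = 0 := by
  intro i hi; fin_cases i <;> first | rfl | exact absurd hi (by decide)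

private lemma supR (w : Fin 3 → ℝ) :
    ∀ i : Fin 6, i.1 < 3 → (![0, 0, 0, w 0, w 1, w 2] : Fin 6 → ℝ) i = 0 := by
  intro i hi; fin_cases i <;> first | rfl | exact absurd hi (by decide)

private lemma sumwL (w : Fin 3 → ℝ) :
    ∑ m, (![w 0, w 1, w 2, 0, 0, 0] : Fin 6 → ℝ) m = ∑ k, w k := by
  rw [Fin.sum_univ_six, Fin.sum_univ_three]
  show w 0 + w 1 + w 2 + 0 + 0 + 0 = w 0 + w 1 + w 2
  ring

private lemma sumwR (w : Fin 3 → ℝ) :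
    ∑ m, (![0, 0, 0, w 0, w 1, w 2] : Fin 6 → ℝ) m = ∑ k, w k := by
  rw [Fin.sum_univ_six, Fin.sum_univ_three]
  show 0 + 0 + 0 + w 0 + w 1 + w 2 = w 0 + w 1 + w 2
  ring

private lemma sumL (w : Fin 3 → ℝ) (a b c d e f : V3) :
    ∑ m, (![w 0, w 1, w 2, 0, 0, 0] : Fin 6 → ℝ) m • (![a, b, c, d, e, f] : Fin 6 → V3) m
      = ∑ k, w k • (![a, b, c] : Fin 3 → V3) k := by
  rw [Fin.sum_univ_six, Fin.sum_univ_three]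
  show w 0 • a + w 1 • b + w 2 • c + (0:ℝ) • d + (0:ℝ) • e + (0:ℝ) • f
      = w 0 • a + w 1 • b + w 2 • c
  simp

private lemma sumR (w : Fin 3 → ℝ) (a b c d e f : V3) :
    ∑ m, (![0, 0, 0, w 0, w 1, w 2] : Fin 6 → ℝ) m • (![a, b, c, d, e, f] : Fin 6 → V3) m
      = ∑ k, w k • (![d, e, f] : Fin 3 → V3) k := by
  rw [Fin.sum_univ_six, Fin.sum_univ_three]
  show (0:ℝ) • a + (0:ℝ) • b + (0:ℝ) • c + w 0 • d + w 1 • e + w 2 • f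
      = w 0 • d + w 1 • e + w 2 • f
  simp

private lemma PvalL (a b c d e f : V3) (k : Fin 3) :
    (![a, b, c, d, e, f] : Fin 6 → V3) (cL k) = (![a, b, c] : Fin 3 → V3) k := by
  fin_cases k <;> rfl

private lemma PvalR (a b c d e f : V3) (k : Fin 3) :
    (![a, b, c, d, e, f] : Fin 6 → V3) (cR k) = (![d, e, f] : Fin 3 → V3) k := by
  fin_cases k <;> rfl

/-! ### One-sided boundary analysis -/

private lemma side_case (p q : Fin 3 → V3)
    (hne : ∀ i j : Fin 3, i ≠ j → p i ≠ p j)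
    (hq : AffineIndependent ℝ q)
    (hdep : ∀ i j : Fin 3, ∀ w v : Fin 3 → ℝ, (∀ k, 0 ≤ w k) → (∀ k, 0 ≤ v k) →
      ∑ k, w k = 1 → ∑ k, v k = 1 → ∑ k, w k • p k = ∑ k, v k • q k →
      w i = 0 → v j = 0 → False)
    (hvert : ∀ (k : Fin 3) (v : Fin 3 → ℝ), (∀ i, 0 ≤ v i) → ∑ i, v i = 1 →
      p k = ∑ i, v i • q i → False)
    (hdisj' : ∀ i j : Fin 3, i ≠ j →
      intrinsicInterior ℝ (segment ℝ (p i) (p j)) ∩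
        intrinsicInterior ℝ (convexHull ℝ (Set.range q)) = ∅)
    (w v : Fin 3 → ℝ) (hw0 : ∀ k, 0 ≤ w k) (hv0 : ∀ k, 0 ≤ v k)
    (hw1 : ∑ k, w k = 1) (hv1 : ∑ k, v k = 1)
    (heq : ∑ k, w k • p k = ∑ k, v k • q k)
    (i : Fin 3) (hwi : w i = 0) : False := by
  by_cases hv : ∀ k, 0 < v k
  swap
  · push_neg at hv
    obtain ⟨j, hj⟩ := hv
    exact hdep i j w v hw0 hv0 hw1 hv1 heq hwi (le_antisymm hj (hv0 j))
  have hx2 : (∑ k, v k • q k) ∈ intrinsicInterior ℝ (convexHull ℝ (Set.range q)) :=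
    mem_intrinsicInterior_of_pos' q hq v hv hv1
  rw [Fin.sum_univ_three] at hw1 heq
  have main : ∀ i₁ i₂ : Fin 3, i₁ ≠ i₂ →
      w i₁ + w i₂ = 1 → w i₁ • p i₁ + w i₂ • p i₂ = ∑ k, v k • q k → False := by
    intro i₁ i₂ h12 hsum hcomb
    by_cases h1 : w i₁ = 0
    · refine hvert i₂ v (fun k => (hv k).le) hv1 ?_
      rw [h1] at hsum hcomb
      simp only [zero_smul, zero_add] at hsum hcomb
      rw [← hcomb, hsum, one_smul]
    · by_cases h2 : w i₂ = 0
      · refine hvert i₁ v (fun k => (hv k).le) hv1 ?_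
        rw [h2] at hsum hcomb
        simp only [zero_smul, add_zero] at hsum hcomb
        rw [← hcomb, hsum, one_smul]
      · have hp1 : 0 < w i₁ := lt_of_le_of_ne (hw0 i₁) (Ne.symm h1)
        have hp2 : 0 < w i₂ := lt_of_le_of_ne (hw0 i₂) (Ne.symm h2)
        have hseg : w i₁ • p i₁ + w i₂ • p i₂ ∈ openSegment ℝ (p i₁) (p i₂) :=
          ⟨w i₁, w i₂, hp1, hp2, hsum, rfl⟩
        have hmem := openSegment_subset_intrinsicInterior' (hne i₁ i₂ h12) hseg
        have hd := hdisj' i₁ i₂ h12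
        rw [Set.eq_empty_iff_forall_notMem] at hd
        exact hd _ ⟨hmem, hcomb ▸ hx2⟩
  fin_cases i <;>
    [(have h0 : w 0 = 0 := hwi); (have h0 : w 1 = 0 := hwi); (have h0 : w 2 = 0 := hwi)] <;>
    rw [h0] at hw1 heq <;>
    simp only [zero_smul, zero_add, add_zero] at hw1 heq
  · exact main 1 2 (by decide) hw1 heq
  · exact main 0 2 (by decide) (by linarith) heq
  · exact main 0 1 (by decide) hw1 heq

/-- The six (edge, other-triangle) pairs associated with the two triangles
`{a,b,c}` and `{d,e,f}` in `ℝ³`: each edge of one triangle paired with the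
convex hull of the other triangle. -/
def edgeTrianglePairs (a b c d e f : EuclideanSpace ℝ (Fin 3)) :
    Fin 6 → Set (EuclideanSpace ℝ (Fin 3)) × Set (EuclideanSpace ℝ (Fin 3))
  | 0 => (segment ℝ a b, convexHull ℝ ({d, e, f} : Set (EuclideanSpace ℝ (Fin 3))))
  | 1 => (segment ℝ b c, convexHull ℝ ({d, e, f} : Set (EuclideanSpace ℝ (Fin 3))))
  | 2 => (segment ℝ a c, convexHull ℝ ({d, e, f} : Set (EuclideanSpace ℝ (Fin 3))))
  | 3 => (segment ℝ d e, convexHull ℝ ({a, b, c} : Set (EuclideanSpace ℝ (Fin 3))))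
  | 4 => (segment ℝ e f, convexHull ℝ ({a, b, c} : Set (EuclideanSpace ℝ (Fin 3))))
  | 5 => (segment ℝ d f, convexHull ℝ ({a, b, c} : Set (EuclideanSpace ℝ (Fin 3))))

set_option maxHeartbeats 2000000 in
/-- If, for two vertex-disjoint triangles in general position in
`ℝ³` (six distinct points, no four coplanar), the relative interior of every edge of
either triangle is disjoint from the relative interior of the other triangle, then
the two (closed) triangles are disjoint. -/
theorem two_triangles_disjoint_of_no_piercing_edge
    (a b c d e f : EuclideanSpace ℝ (Fin 3))
    (hinj : Function.Injective ![a, b, c, d, e, f])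
    (hgen : ∀ s : Finset (Fin 6), s.card = 4 →
      AffineIndependent ℝ (fun i : s => (![a, b, c, d, e, f] : Fin 6 → _) i.1))
    (hdisj : ∀ i : Fin 6,
      intrinsicInterior ℝ (edgeTrianglePairs a b c d e f i).1 ∩
        intrinsicInterior ℝ (edgeTrianglePairs a b c d e f i).2 = ∅) :
    convexHull ℝ ({a, b, c} : Set (EuclideanSpace ℝ (Fin 3))) ∩
      convexHull ℝ ({d, e, f} : Set (EuclideanSpace ℝ (Fin 3))) = ∅ := by
  classical
  have hginj1 : Function.Injective (![0, 1, 2] : Fin 3 → Fin 6) := by decide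
  have hginj2 : Function.Injective (![3, 4, 5] : Fin 3 → Fin 6) := by decide
  have hconvp : ∀ k : Fin 3, (![a, b, c] : Fin 3 → V3) k
      = (![a, b, c, d, e, f] : Fin 6 → V3) ((![0, 1, 2] : Fin 3 → Fin 6) k) := by
    intro k; fin_cases k <;> rfl
  have hconvq : ∀ k : Fin 3, (![d, e, f] : Fin 3 → V3) k
      = (![a, b, c, d, e, f] : Fin 6 → V3) ((![3, 4, 5] : Fin 3 → Fin 6) k) := by
    intro k; fin_cases k <;> rfl
  have hpi : AffineIndependent ℝ (![a, b, c] : Fin 3 → V3) := by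
    have h := indep_triple ![a, b, c, d, e, f] hgen ![0, 1, 2] hginj1
    have e : (![a, b, c, d, e, f] : Fin 6 → V3) ∘ ![0, 1, 2] = ![a, b, c] := by
      funext k; exact (hconvp k).symm
    rwa [e] at h
  have hqi : AffineIndependent ℝ (![d, e, f] : Fin 3 → V3) := by
    have h := indep_triple ![a, b, c, d, e, f] hgen ![3, 4, 5] hginj2
    have e : (![a, b, c, d, e, f] : Fin 6 → V3) ∘ ![3, 4, 5] = ![d, e, f] := by
      funext k; exact (hconvq k).symm
    rwa [e] at h
  have hpne : ∀ i j : Fin 3, i ≠ j →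
      (![a, b, c] : Fin 3 → V3) i ≠ (![a, b, c] : Fin 3 → V3) j := by
    intro i j hij h
    rw [hconvp i, hconvp j] at h
    exact hij (hginj1 (hinj h))
  have hqne : ∀ i j : Fin 3, i ≠ j →
      (![d, e, f] : Fin 3 → V3) i ≠ (![d, e, f] : Fin 3 → V3) j := by
    intro i j hij h
    rw [hconvq i, hconvq j] at h
    exact hij (hginj2 (hinj h))
  have hrangep : ({a, b, c} : Set V3) = Set.range (![a, b, c] : Fin 3 → V3) := by
    ext y; simp [or_comm, or_assoc, or_left_comm]
  have hrangeq : ({d, e, f} : Set V3) = Set.range (![d, e, f] : Fin 3 → V3) := by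
    ext y; simp [or_comm, or_assoc, or_left_comm]
  -- the disjointness hypotheses, reformulated
  have hdisjL : ∀ i j : Fin 3, i ≠ j →
      intrinsicInterior ℝ (segment ℝ ((![a, b, c] : Fin 3 → V3) i) (![a, b, c] j)) ∩
        intrinsicInterior ℝ (convexHull ℝ (Set.range (![d, e, f] : Fin 3 → V3))) = ∅ := by
    have h0 := hdisj 0
    have h1 := hdisj 1
    have h2 := hdisj 2
    rw [show edgeTrianglePairs a b c d e f 0 =
      (segment ℝ a b, convexHull ℝ {d, e, f}) from rfl] at h0
    rw [show edgeTrianglePairs a b c d e f 1 =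
      (segment ℝ b c, convexHull ℝ {d, e, f}) from rfl] at h1
    rw [show edgeTrianglePairs a b c d e f 2 =
      (segment ℝ a c, convexHull ℝ {d, e, f}) from rfl] at h2
    rw [hrangeq] at h0 h1 h2
    intro i j hij
    fin_cases i <;> fin_cases j <;>
      first
        | exact absurd rfl hij
        | exact h0
        | exact h1
        | exact h2
        | (rw [segment_symm]; first | exact h0 | exact h1 | exact h2)
  have hdisjR : ∀ i j : Fin 3, i ≠ j →
      intrinsicInterior ℝ (segment ℝ ((![d, e, f] : Fin 3 → V3) i) (![d, e, f] j)) ∩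
        intrinsicInterior ℝ (convexHull ℝ (Set.range (![a, b, c] : Fin 3 → V3))) = ∅ := by
    have h3 := hdisj 3
    have h4 := hdisj 4
    have h5 := hdisj 5
    rw [show edgeTrianglePairs a b c d e f 3 =
      (segment ℝ d e, convexHull ℝ {a, b, c}) from rfl] at h3
    rw [show edgeTrianglePairs a b c d e f 4 =
      (segment ℝ e f, convexHull ℝ {a, b, c}) from rfl] at h4
    rw [show edgeTrianglePairs a b c d e f 5 =
      (segment ℝ d f, convexHull ℝ {a, b, c}) from rfl] at h5
    rw [hrangep] at h3 h4 h5
    intro i j hij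
    fin_cases i <;> fin_cases j <;>
      first
        | exact absurd rfl hij
        | exact h3
        | exact h4
        | exact h5
        | (rw [segment_symm]; first | exact h3 | exact h4 | exact h5)
  -- the dependency contradictions
  have hdepL : ∀ i j : Fin 3, ∀ w' v' : Fin 3 → ℝ, (∀ k, 0 ≤ w' k) → (∀ k, 0 ≤ v' k) →
      ∑ k, w' k = 1 → ∑ k, v' k = 1 →
      ∑ k, w' k • (![a, b, c] : Fin 3 → V3) k = ∑ k, v' k • (![d, e, f] : Fin 3 → V3) k →
      w' i = 0 → v' j = 0 → False := by
    intro i j w' v' hw'0 hv'0 hw'1 hv'1 heq' hzi hzj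
    exact dep_pair ![a, b, c, d, e, f] hgen ![w' 0, w' 1, w' 2, 0, 0, 0]
      ![0, 0, 0, v' 0, v' 1, v' 2] (supL w') (supR v')
      (by rw [sumwL]; exact hw'1) (by rw [sumwR]; exact hv'1)
      (by rw [sumL, sumR]; exact heq') (cL i) (cR j) i.isLt (Nat.le_add_left 3 _)
      (by rw [evalL]; exact hzi) (by rw [evalR]; exact hzj)
  have hdepR : ∀ i j : Fin 3, ∀ w' v' : Fin 3 → ℝ, (∀ k, 0 ≤ w' k) → (∀ k, 0 ≤ v' k) →
      ∑ k, w' k = 1 → ∑ k, v' k = 1 →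
      ∑ k, w' k • (![d, e, f] : Fin 3 → V3) k = ∑ k, v' k • (![a, b, c] : Fin 3 → V3) k →
      w' i = 0 → v' j = 0 → False := by
    intro i j w' v' hw'0 hv'0 hw'1 hv'1 heq' hzi hzj
    exact dep_pair ![a, b, c, d, e, f] hgen ![v' 0, v' 1, v' 2, 0, 0, 0]
      ![0, 0, 0, w' 0, w' 1, w' 2] (supL v') (supR w')
      (by rw [sumwL]; exact hv'1) (by rw [sumwR]; exact hw'1)
      (by rw [sumL, sumR]; exact heq'.symm) (cL j) (cR i) j.isLt (Nat.le_add_left 3 _)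
      (by rw [evalL]; exact hzj) (by rw [evalR]; exact hzi)
  have hvertL : ∀ (k : Fin 3) (v' : Fin 3 → ℝ), (∀ i, 0 ≤ v' i) → ∑ i, v' i = 1 →
      (![a, b, c] : Fin 3 → V3) k = ∑ i, v' i • (![d, e, f] : Fin 3 → V3) i → False := by
    intro k v' hv'0 hv'1 heq'
    exact dep_vertexL ![a, b, c, d, e, f] hgen (cL k) k.isLt
      ![0, 0, 0, v' 0, v' 1, v' 2] (supR v') (by rw [sumwR]; exact hv'1)
      (by rw [PvalL, sumR]; exact heq')
  have hvertR : ∀ (k : Fin 3) (w' : Fin 3 → ℝ), (∀ i, 0 ≤ w' i) → ∑ i, w' i = 1 →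
      (![d, e, f] : Fin 3 → V3) k = ∑ i, w' i • (![a, b, c] : Fin 3 → V3) i → False := by
    intro k w' hw'0 hw'1 heq'
    exact dep_vertexR ![a, b, c, d, e, f] hgen (cR k) (Nat.le_add_left 3 _)
      ![w' 0, w' 1, w' 2, 0, 0, 0] (supL w') (by rw [sumwL]; exact hw'1)
      (by rw [PvalR, sumL]; exact heq')
  -- main argument
  rw [hrangep, hrangeq, Set.eq_empty_iff_forall_notMem]
  intro x hx
  have hcpt : IsCompact (convexHull ℝ (Set.range (![a, b, c] : Fin 3 → V3)) ∩
      convexHull ℝ (Set.range (![d, e, f] : Fin 3 → V3))) :=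
    ((Set.finite_range _).isCompact_convexHull (𝕜 := ℝ)).inter_right
      ((Set.finite_range _).isCompact_convexHull (𝕜 := ℝ)).isClosed
  obtain ⟨x₀, hx₀⟩ := hcpt.extremePoints_nonempty ⟨x, hx⟩
  rw [mem_extremePoints] at hx₀
  obtain ⟨⟨hx₀1, hx₀2⟩, hext⟩ := hx₀
  obtain ⟨w, hw0, hw1, hwx⟩ := (mem_convexHull_range_iff' _ x₀).1 hx₀1
  obtain ⟨v, hv0, hv1, hvx⟩ := (mem_convexHull_range_iff' _ x₀).1 hx₀2
  have heqwv : ∑ k, w k • (![a, b, c] : Fin 3 → V3) k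
      = ∑ k, v k • (![d, e, f] : Fin 3 → V3) k := by rw [hwx, hvx]
  by_cases hwp : ∀ k, 0 < w k
  · by_cases hvp : ∀ k, 0 < v k
    · -- x₀ lies in the relative interior of both triangle planes; it cannot be extreme
      set p : Fin 3 → V3 := ![a, b, c] with hpdef
      set q : Fin 3 → V3 := ![d, e, f] with hqdef
      have hliP : LinearIndependent ℝ ![p 1 - p 0, p 2 - p 0] := by
        rw [LinearIndependent.pair_iff]
        intro s t hst
        have h0 : ∑ k, (![-(s + t), s, t] : Fin 3 → ℝ) k = 0 := by
          rw [Fin.sum_univ_three]; show -(s + t) + s + t = 0; ring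
        have h1 : ∑ k, (![-(s + t), s, t] : Fin 3 → ℝ) k • p k = 0 := by
          rw [Fin.sum_univ_three]
          show (-(s + t)) • p 0 + s • p 1 + t • p 2 = 0
          linear_combination (norm := module) hst
        have h2 := affineIndependent_iff.1 hpi Finset.univ _ h0 h1
        exact ⟨by simpa using h2 1 (Finset.mem_univ _),
          by simpa using h2 2 (Finset.mem_univ _)⟩
      have hliQ : LinearIndependent ℝ ![q 1 - q 0, q 2 - q 0] := by
        rw [LinearIndependent.pair_iff]
        intro s t hst
        have h0 : ∑ k, (![-(s + t), s, t] : Fin 3 → ℝ) k = 0 := by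
          rw [Fin.sum_univ_three]; show -(s + t) + s + t = 0; ring
        have h1 : ∑ k, (![-(s + t), s, t] : Fin 3 → ℝ) k • q k = 0 := by
          rw [Fin.sum_univ_three]
          show (-(s + t)) • q 0 + s • q 1 + t • q 2 = 0
          linear_combination (norm := module) hst
        have h2 := affineIndependent_iff.1 hqi Finset.univ _ h0 h1
        exact ⟨by simpa using h2 1 (Finset.mem_univ _),
          by simpa using h2 2 (Finset.mem_univ _)⟩
      set W1 := Submodule.span ℝ ({p 1 - p 0, p 2 - p 0} : Set V3) with hW1def
      set W2 := Submodule.span ℝ ({q 1 - q 0, q 2 - q 0} : Set V3) with hW2def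
      have hrk1 : Module.finrank ℝ W1 = 2 := by
        have h := finrank_span_eq_card hliP
        rw [show Set.range ![p 1 - p 0, p 2 - p 0] = {p 1 - p 0, p 2 - p 0} from by
          ext y; simp [or_comm]] at h
        simpa using h
      have hrk2 : Module.finrank ℝ W2 = 2 := by
        have h := finrank_span_eq_card hliQ
        rw [show Set.range ![q 1 - q 0, q 2 - q 0] = {q 1 - q 0, q 2 - q 0} from by
          ext y; simp [or_comm]] at h
        simpa using h
      have hdim : W1 ⊓ W2 ≠ ⊥ := by
        intro hbot
        have hle : Module.finrank ℝ ↥(W1 ⊔ W2) ≤ 3 := by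
          have h := Submodule.finrank_le (W1 ⊔ W2)
          rwa [finrank_euclideanSpace_fin] at h
        have h := Submodule.finrank_sup_add_finrank_inf_eq W1 W2
        rw [hbot, finrank_bot, hrk1, hrk2] at h
        omega
      obtain ⟨v₀, hv₀mem, hv₀ne⟩ := Submodule.exists_mem_ne_zero_of_ne_bot hdim
      obtain ⟨hv₀1, hv₀2⟩ := Submodule.mem_inf.1 hv₀mem
      obtain ⟨s, t, hst⟩ := Submodule.mem_span_pair.1 hv₀1
      obtain ⟨s', t', hst'⟩ := Submodule.mem_span_pair.1 hv₀2
      have hδpos : (0:ℝ) < min (min (w 0) (min (w 1) (w 2))) (min (v 0) (min (v 1) (v 2))) := by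
        simp only [lt_min_iff]
        exact ⟨⟨hwp 0, hwp 1, hwp 2⟩, hvp 0, hvp 1, hvp 2⟩
      set δ := min (min (w 0) (min (w 1) (w 2))) (min (v 0) (min (v 1) (v 2))) with hδdef
      have hδw0 : δ ≤ w 0 := le_trans (min_le_left _ _) (min_le_left _ _)
      have hδw1 : δ ≤ w 1 :=
        le_trans (min_le_left _ _) (le_trans (min_le_right _ _) (min_le_left _ _))
      have hδw2 : δ ≤ w 2 :=
        le_trans (min_le_left _ _) (le_trans (min_le_right _ _) (min_le_right _ _))
      have hδv0 : δ ≤ v 0 := le_trans (min_le_right _ _) (min_le_left _ _)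
      have hδv1 : δ ≤ v 1 :=
        le_trans (min_le_right _ _) (le_trans (min_le_right _ _) (min_le_left _ _))
      have hδv2 : δ ≤ v 2 :=
        le_trans (min_le_right _ _) (le_trans (min_le_right _ _) (min_le_right _ _))
      set M := |s| + |t| + |s'| + |t'| + 1 with hMdef
      have hMpos : (0:ℝ) < M := by positivity
      set ε := δ / M with hεdef
      have hεpos : 0 < ε := div_pos hδpos hMpos
      have hεM : ε * M = δ := div_mul_cancel₀ _ hMpos.ne'
      have hεsum : ε * |s| + ε * |t| + ε * |s'| + ε * |t'| + ε = δ := by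
        rw [← hεM, hMdef]; ring
      have hbs1 : ε * s ≤ ε * |s| := mul_le_mul_of_nonneg_left (le_abs_self s) hεpos.le
      have hbs2 : -(ε * |s|) ≤ ε * s := by
        have h := mul_le_mul_of_nonneg_left (neg_abs_le s) hεpos.le
        rwa [mul_neg] at h
      have hbt1 : ε * t ≤ ε * |t| := mul_le_mul_of_nonneg_left (le_abs_self t) hεpos.le
      have hbt2 : -(ε * |t|) ≤ ε * t := by
        have h := mul_le_mul_of_nonneg_left (neg_abs_le t) hεpos.le
        rwa [mul_neg] at h
      have hbs'1 : ε * s' ≤ ε * |s'| := mul_le_mul_of_nonneg_left (le_abs_self s') hεpos.le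
      have hbs'2 : -(ε * |s'|) ≤ ε * s' := by
        have h := mul_le_mul_of_nonneg_left (neg_abs_le s') hεpos.le
        rwa [mul_neg] at h
      have hbt'1 : ε * t' ≤ ε * |t'| := mul_le_mul_of_nonneg_left (le_abs_self t') hεpos.le
      have hbt'2 : -(ε * |t'|) ≤ ε * t' := by
        have h := mul_le_mul_of_nonneg_left (neg_abs_le t') hεpos.le
        rwa [mul_neg] at h
      rw [Fin.sum_univ_three] at hwx hvx hw1 hv1
      have hy1 : x₀ + ε • v₀ = (w 0 - (ε * s + ε * t)) • p 0
          + (w 1 + ε * s) • p 1 + (w 2 + ε * t) • p 2 := by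
        rw [← hwx, ← hst]; module
      have hy2 : x₀ + ε • v₀ = (v 0 - (ε * s' + ε * t')) • q 0
          + (v 1 + ε * s') • q 1 + (v 2 + ε * t') • q 2 := by
        rw [← hvx, ← hst']; module
      have hz1 : x₀ - ε • v₀ = (w 0 + (ε * s + ε * t)) • p 0
          + (w 1 - ε * s) • p 1 + (w 2 - ε * t) • p 2 := by
        rw [← hwx, ← hst]; module
      have hz2 : x₀ - ε • v₀ = (v 0 + (ε * s' + ε * t')) • q 0
          + (v 1 - ε * s') • q 1 + (v 2 - ε * t') • q 2 := by
        rw [← hvx, ← hst']; module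
      have hy1m : x₀ + ε • v₀ ∈ convexHull ℝ (Set.range p) := by
        refine (mem_convexHull_range_iff' p _).2
          ⟨![w 0 - (ε * s + ε * t), w 1 + ε * s, w 2 + ε * t], ?_, ?_, ?_⟩
        · intro k; fin_cases k
          · show (0:ℝ) ≤ w 0 - (ε * s + ε * t); linarith
          · show (0:ℝ) ≤ w 1 + ε * s; linarith
          · show (0:ℝ) ≤ w 2 + ε * t; linarith
        · rw [Fin.sum_univ_three]
          show w 0 - (ε * s + ε * t) + (w 1 + ε * s) + (w 2 + ε * t) = 1
          linarith
        · rw [Fin.sum_univ_three]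
          exact hy1.symm
      have hy2m : x₀ + ε • v₀ ∈ convexHull ℝ (Set.range q) := by
        refine (mem_convexHull_range_iff' q _).2
          ⟨![v 0 - (ε * s' + ε * t'), v 1 + ε * s', v 2 + ε * t'], ?_, ?_, ?_⟩
        · intro k; fin_cases k
          · show (0:ℝ) ≤ v 0 - (ε * s' + ε * t'); linarith
          · show (0:ℝ) ≤ v 1 + ε * s'; linarith
          · show (0:ℝ) ≤ v 2 + ε * t'; linarith
        · rw [Fin.sum_univ_three]
          show v 0 - (ε * s' + ε * t') + (v 1 + ε * s') + (v 2 + ε * t') = 1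
          linarith
        · rw [Fin.sum_univ_three]
          exact hy2.symm
      have hz1m : x₀ - ε • v₀ ∈ convexHull ℝ (Set.range p) := by
        refine (mem_convexHull_range_iff' p _).2
          ⟨![w 0 + (ε * s + ε * t), w 1 - ε * s, w 2 - ε * t], ?_, ?_, ?_⟩
        · intro k; fin_cases k
          · show (0:ℝ) ≤ w 0 + (ε * s + ε * t); linarith
          · show (0:ℝ) ≤ w 1 - ε * s; linarith
          · show (0:ℝ) ≤ w 2 - ε * t; linarith
        · rw [Fin.sum_univ_three]
          show w 0 + (ε * s + ε * t) + (w 1 - ε * s) + (w 2 - ε * t) = 1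
          linarith
        · rw [Fin.sum_univ_three]
          exact hz1.symm
      have hz2m : x₀ - ε • v₀ ∈ convexHull ℝ (Set.range q) := by
        refine (mem_convexHull_range_iff' q _).2
          ⟨![v 0 + (ε * s' + ε * t'), v 1 - ε * s', v 2 - ε * t'], ?_, ?_, ?_⟩
        · intro k; fin_cases k
          · show (0:ℝ) ≤ v 0 + (ε * s' + ε * t'); linarith
          · show (0:ℝ) ≤ v 1 - ε * s'; linarith
          · show (0:ℝ) ≤ v 2 - ε * t'; linarith
        · rw [Fin.sum_univ_three]
          show v 0 + (ε * s' + ε * t') + (v 1 - ε * s') + (v 2 - ε * t') = 1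
          linarith
        · rw [Fin.sum_univ_three]
          exact hz2.symm
      have hopen : x₀ ∈ openSegment ℝ (x₀ + ε • v₀) (x₀ - ε • v₀) :=
        ⟨1/2, 1/2, by norm_num, by norm_num, by norm_num, by module⟩
      have hcontr := (hext _ ⟨hy1m, hy2m⟩ _ ⟨hz1m, hz2m⟩ hopen).1
      have hzero : ε • v₀ = 0 := by
        have h := congrArg (fun y => y - x₀) hcontr
        simpa using h
      rcases smul_eq_zero.1 hzero with h | h
      · exact hεpos.ne' h
      · exact hv₀ne h
    · push_neg at hvp
      obtain ⟨j, hj⟩ := hvp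
      exact side_case ![d, e, f] ![a, b, c] hqne hpi hdepR hvertR hdisjR v w hv0 hw0 hv1 hw1
        heqwv.symm j (le_antisymm hj (hv0 j))
  · push_neg at hwp
    obtain ⟨i, hi⟩ := hwp
    exact side_case ![a, b, c] ![d, e, f] hpne hqi hdepL hvertL hdisjL w v hw0 hv0 hw1 hv1
      heqwv i (le_antisymm hi (hw0 i))
end

section
/- Let Δ be a combinatorial triangulation of a closed surface on vertex set V, and let ψ : V → ℝ³ be a polyhedral immersion of Δ. Let {a,b} be an edge of Δ and {d,e,f} a triangle of Δ. If {a,b} ∩ {d,e,f} ≠ ∅, or if at least one of the sets {a,b,d}, {a,b,e}, {a,b,f} is a triangle of Δ, then the segment conv{ψ(a), ψ(b)} does not meet the relative interior of the triangle conv{ψ(d), ψ(e), ψ(f)}. -/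
open Finset

open AffineMap in
set_option maxHeartbeats 1000000 in
lemma relint_disjoint_face {E : Type*} [NormedAddCommGroup E] [NormedSpace ℝ E]
    [FiniteDimensional ℝ E]
    {t : Set E} (hind : AffineIndependent ℝ ((↑) : t → E))
    {z : E} (hz : z ∈ t) {p : E}
    (hp : p ∈ intrinsicInterior ℝ (convexHull ℝ t)) :
    p ∉ convexHull ℝ (t \ {z}) := by
  intro hps
  obtain ⟨t', hsub, hind', hspan⟩ := exists_subset_affineIndependent_affineSpan_eq_top hind
  let b : AffineBasis t' ℝ E := ⟨(↑), hind', by rwa [Subtype.range_coe]⟩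
  set γ : E →ᵃ[ℝ] ℝ := b.coord ⟨z, hsub hz⟩ with hγdef
  have hγz : γ z = 1 := by
    have h1 := b.coord_apply_eq ⟨z, hsub hz⟩
    have hb : b ⟨z, hsub hz⟩ = z := rfl
    rw [hb] at h1
    exact h1
  have hγ0 : ∀ x ∈ t \ {z}, γ x = 0 := by
    rintro x ⟨hxt, hxz⟩
    have hne : (⟨z, hsub hz⟩ : t') ≠ ⟨x, hsub hxt⟩ :=
      fun h => hxz (congrArg Subtype.val h).symm
    have h1 := b.coord_apply_ne hne
    have hb : b ⟨x, hsub hxt⟩ = x := rfl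
    rw [hb] at h1
    exact h1
  have hnonneg : ∀ w ∈ convexHull ℝ t, 0 ≤ γ w := by
    intro w hw
    have h1 : γ w ∈ γ '' convexHull ℝ t := Set.mem_image_of_mem _ hw
    rw [AffineMap.image_convexHull] at h1
    have hsub2 : γ '' t ⊆ Set.Ici (0:ℝ) := by
      rintro _ ⟨x, hxt, rfl⟩
      by_cases hxz : x = z
      · subst hxz; rw [hγz]; exact Set.mem_Ici.mpr zero_le_one
      · rw [hγ0 x ⟨hxt, hxz⟩]; exact Set.self_mem_Ici
    exact convexHull_min hsub2 (convex_Ici 0) h1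
  have hγp : γ p = 0 := by
    have h1 : γ p ∈ γ '' convexHull ℝ (t \ {z}) := Set.mem_image_of_mem _ hps
    rw [AffineMap.image_convexHull] at h1
    have hsub2 : γ '' (t \ {z}) ⊆ ({0} : Set ℝ) := by
      rintro _ ⟨x, hxt, rfl⟩; exact hγ0 x hxt
    simpa using convexHull_min hsub2 (convex_singleton 0) h1
  set S := affineSpan ℝ (convexHull ℝ t) with hS
  rw [mem_intrinsicInterior] at hp
  obtain ⟨q, hq, hqp⟩ := hp
  have hzS : z ∈ S := subset_affineSpan ℝ _ (subset_convexHull ℝ t hz)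
  have hpS : p ∈ S := by rw [← hqp]; exact q.2
  obtain ⟨ε, hε, hball⟩ := Metric.isOpen_iff.mp isOpen_interior q hq
  have hzp : z ≠ p := by
    intro h; rw [← h, hγz] at hγp; norm_num at hγp
  have hd : (0:ℝ) < dist z p := dist_pos.mpr hzp
  set t0 : ℝ := 1 + ε / (2 * dist z p) with ht0
  have ht01 : 1 < t0 := by
    have h3 : 0 < ε / (2 * dist z p) := by positivity
    rw [ht0]
    linarith
  set w : E := lineMap z p t0 with hw
  have hwS : w ∈ S := by
    rw [hw, lineMap_apply]
    exact S.smul_vsub_vadd_mem t0 hpS hzS hzS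
  have hdist : dist (⟨w, hwS⟩ : S) q < ε := by
    rw [Subtype.dist_eq, hqp]
    have hdd : dist w p = |t0 - 1| * dist z p := by
      rw [hw]
      have h2 := dist_lineMap_lineMap z p t0 1
      simpa [Real.norm_eq_abs, Real.dist_eq] using h2
    rw [hdd, abs_of_pos (by linarith), ht0]
    have h2 : (1 + ε / (2 * dist z p) - 1) * dist z p = ε / 2 := by
      field_simp; ring
    rw [h2]; linarith
  have hwmem : w ∈ convexHull ℝ t := by
    have h5 : (⟨w, hwS⟩ : S) ∈ (Subtype.val ⁻¹' convexHull ℝ t : Set S) :=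
      interior_subset (hball hdist)
    exact h5
  have hγw : γ w = 1 - t0 := by
    rw [hw, AffineMap.apply_lineMap, hγz, hγp, lineMap_apply]
    simp [smul_eq_mul]
    ring
  have hn := hnonneg w hwmem
  rw [hγw] at hn
  linarith

/-- The set of edges of a family `Δ` of triangles on vertex set `V`:
all 2-element subsets of `V` contained in some triangle of `Δ`. -/
def triEdges {V : Type*} [Fintype V] [DecidableEq V] (Δ : Finset (Finset V)) :
    Finset (Finset V) :=
  (Finset.univ.powersetCard 2).filter (fun e => ∃ T ∈ Δ, e ⊆ T)

/-- The vertices of the link of `v`: those `u` with `{v, u}` an edge. -/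
def linkVerts {V : Type*} [Fintype V] [DecidableEq V] (Δ : Finset (Finset V)) (v : V) :
    Finset V :=
  Finset.univ.filter (fun u => ({v, u} : Finset V) ∈ triEdges Δ)

/-- The link graph of a vertex `v`: vertices are the `u` with `{v,u}` an edge,
and `u`, `w` are adjacent iff `{v,u,w}` is a triangle of `Δ`. -/
def linkGraph {V : Type*} [Fintype V] [DecidableEq V] (Δ : Finset (Finset V)) (v : V) :
    SimpleGraph {u : V // u ∈ linkVerts Δ v} where
  Adj u w := u ≠ w ∧ ({v, u.1, w.1} : Finset V) ∈ Δ
  symm := by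
    constructor
    rintro u w ⟨h1, h2⟩
    refine ⟨h1.symm, ?_⟩
    rwa [Finset.pair_comm w.1 u.1]
  loopless := by constructor; rintro u ⟨h, _⟩; exact h rfl

/-- The edge graph of `Δ` on the vertex set `V`. -/
def edgeGraph {V : Type*} [Fintype V] [DecidableEq V] (Δ : Finset (Finset V)) :
    SimpleGraph V where
  Adj a b := a ≠ b ∧ ({a, b} : Finset V) ∈ triEdges Δ
  symm := by
    constructor
    rintro a b ⟨h1, h2⟩
    refine ⟨h1.symm, ?_⟩
    rwa [Finset.pair_comm b a]
  loopless := by constructor; rintro a ⟨h, _⟩; exact h rfl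

/-- A combinatorial triangulation of a closed surface on the (finite) vertex set `V`. -/
structure IsTriangulation {V : Type*} [Fintype V] [DecidableEq V]
    (Δ : Finset (Finset V)) : Prop where
  /-- every element of `Δ` is a triangle, i.e. has exactly 3 vertices -/
  card3 : ∀ T ∈ Δ, T.card = 3
  /-- every vertex belongs to some triangle -/
  cover : ∀ v : V, ∃ T ∈ Δ, v ∈ T
  /-- every 2-element subset of a triangle is contained in exactly two triangles -/
  edgeTwo : ∀ T ∈ Δ, ∀ e ⊆ T, e.card = 2 → (Δ.filter (fun T' => e ⊆ T')).card = 2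
  /-- the link graph of every vertex is connected -/
  linkConn : ∀ v : V, (linkGraph Δ v).Connected
  /-- the link graph of every vertex is 2-regular -/
  linkReg : ∀ v : V, ∀ u ∈ linkVerts Δ v,
    ((linkVerts Δ v).filter (fun w => w ≠ u ∧ ({v, u, w} : Finset V) ∈ Δ)).card = 2
  /-- the edge graph is connected -/
  edgeConn : (edgeGraph Δ).Connected

/-- A polyhedral immersion of a triangulation `Δ` into `ℝ³`, given by a
coordinatization `ψ` of the vertices: (i) the images of the vertices of every
triangle are affinely independent, and (ii) any two triangles sharing a vertex
or an edge intersect, after realization, exactly in the realization of their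
common face. -/
def IsPolyhedralImmersion {V : Type*} [Fintype V] [DecidableEq V]
    (Δ : Finset (Finset V)) (ψ : V → EuclideanSpace ℝ (Fin 3)) : Prop :=
  (∀ T ∈ Δ, ∀ u v w : V, T = {u, v, w} → AffineIndependent ℝ ![ψ u, ψ v, ψ w]) ∧
  (∀ T ∈ Δ, ∀ T' ∈ Δ, (T ∩ T').Nonempty →
    convexHull ℝ (ψ '' (T : Set V)) ∩ convexHull ℝ (ψ '' (T' : Set V)) =
      convexHull ℝ (ψ '' ((T ∩ T' : Finset V) : Set V)))

/-- **edge-cut analysis.** In a polyhedral immersion of a combinatorial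
triangulation, if an edge `{a,b}` shares a vertex with a triangle `{d,e,f}`, or if one
of `{a,b,d}`, `{a,b,e}`, `{a,b,f}` is a triangle of `Δ`, then the segment from `ψ a`
to `ψ b` does not meet the relative interior of the realized triangle. -/
theorem edge_cut_analysis
    {V : Type*} [Fintype V] [DecidableEq V] (Δ : Finset (Finset V))
    (hΔ : IsTriangulation Δ)
    (ψ : V → EuclideanSpace ℝ (Fin 3))
    (hψ : IsPolyhedralImmersion Δ ψ)
    (a b d e f : V)
    (hedge : ({a, b} : Finset V) ∈ triEdges Δ)
    (htri : ({d, e, f} : Finset V) ∈ Δ)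
    (hcond : (({a, b} : Finset V) ∩ ({d, e, f} : Finset V)).Nonempty ∨
      ({a, b, d} : Finset V) ∈ Δ ∨ ({a, b, e} : Finset V) ∈ Δ ∨
      ({a, b, f} : Finset V) ∈ Δ) :
    segment ℝ (ψ a) (ψ b) ∩
      intrinsicInterior ℝ
        (convexHull ℝ ({ψ d, ψ e, ψ f} : Set (EuclideanSpace ℝ (Fin 3)))) = ∅ := by
  classical
  have hedge' := hedge
  rw [triEdges, Finset.mem_filter, Finset.mem_powersetCard] at hedge'
  obtain ⟨⟨-, hcard2⟩, T0, hT0, habT0⟩ := hedge'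
  -- choose a triangle T' containing {a,b} and meeting T := {d,e,f}
  obtain ⟨T', hT'Δ, habT', hTT'⟩ :
      ∃ T' ∈ Δ, ({a, b} : Finset V) ⊆ T' ∧ (T' ∩ ({d, e, f} : Finset V)).Nonempty := by
    rcases hcond with h | h | h | h
    · obtain ⟨v, hv⟩ := h
      rw [Finset.mem_inter] at hv
      exact ⟨T0, hT0, habT0, ⟨v, Finset.mem_inter.mpr ⟨habT0 hv.1, hv.2⟩⟩⟩
    · refine ⟨{a, b, d}, h, ?_, ⟨d, by simp⟩⟩
      intro x hx; simp at hx ⊢; tauto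
    · refine ⟨{a, b, e}, h, ?_, ⟨e, by simp⟩⟩
      intro x hx; simp at hx ⊢; tauto
    · refine ⟨{a, b, f}, h, ?_, ⟨f, by simp⟩⟩
      intro x hx; simp at hx ⊢; tauto
  have haff : AffineIndependent ℝ ![ψ d, ψ e, ψ f] := hψ.1 _ htri d e f rfl
  set tset : Set (EuclideanSpace ℝ (Fin 3)) := {ψ d, ψ e, ψ f} with htset
  have hrange : Set.range ![ψ d, ψ e, ψ f] = tset := by
    ext x
    constructor
    · rintro ⟨i, rfl⟩; fin_cases i <;> simp [htset]
    · rintro (rfl | rfl | rfl)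
      exacts [⟨0, rfl⟩, ⟨1, rfl⟩, ⟨2, rfl⟩]
  have htind : AffineIndependent ℝ ((↑) : tset → EuclideanSpace ℝ (Fin 3)) := by
    have h2 := haff.range
    rwa [hrange] at h2
  have himT : ψ '' (({d, e, f} : Finset V) : Set V) = tset := by
    simp [htset, Set.image_insert_eq]
  -- pairwise distinct images
  have hinj := haff.injective
  have h1 : ψ d ≠ ψ e := fun h => by
    have := hinj (a₁ := 0) (a₂ := 1) (by simpa using h); simp at this
  have h2 : ψ d ≠ ψ f := fun h => by
    have := hinj (a₁ := 0) (a₂ := 2) (by simpa using h); simp at this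
  have h3 : ψ e ≠ ψ f := fun h => by
    have := hinj (a₁ := 1) (a₂ := 2) (by simpa using h); simp at this
  have hinjT : ∀ x ∈ ({d, e, f} : Finset V), ∀ y ∈ ({d, e, f} : Finset V),
      ψ x = ψ y → x = y := by
    intro x hx y hy h
    simp only [Finset.mem_insert, Finset.mem_singleton] at hx hy
    rcases hx with rfl | rfl | rfl <;> rcases hy with rfl | rfl | rfl <;>
      first
        | rfl
        | exact absurd h h1 | exact absurd h h2 | exact absurd h h3
        | exact absurd h.symm h1 | exact absurd h.symm h2 | exact absurd h.symm h3
  -- main argument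
  ext p
  simp only [Set.mem_inter_iff, Set.mem_empty_iff_false, iff_false, not_and]
  intro hp1 hp2
  have hpab : p ∈ convexHull ℝ (ψ '' (({a, b} : Finset V) : Set V)) := by
    rw [Finset.coe_insert, Finset.coe_singleton, Set.image_insert_eq, Set.image_singleton,
      convexHull_pair]
    exact hp1
  have hpT : p ∈ convexHull ℝ (ψ '' (({d, e, f} : Finset V) : Set V)) := by
    rw [himT]
    exact intrinsicInterior_subset hp2
  have hpT' : p ∈ convexHull ℝ (ψ '' ((T' : Finset V) : Set V)) := by
    refine convexHull_mono (Set.image_mono (f := ψ) ?_) hpab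
    exact_mod_cast habT'
  have hkey := hψ.2 T' hT'Δ _ htri hTT'
  have hpint : p ∈ convexHull ℝ (ψ '' ((T' ∩ ({d, e, f} : Finset V) : Finset V) : Set V)) := by
    rw [← hkey]; exact ⟨hpT', hpT⟩
  -- produce a proper sub-face containing p
  obtain ⟨Sf, hpS, hST, hSneT⟩ :
      ∃ Sf : Finset V, p ∈ convexHull ℝ (ψ '' (Sf : Set V)) ∧
        Sf ⊆ ({d, e, f} : Finset V) ∧ Sf ≠ ({d, e, f} : Finset V) := by
    by_cases hEq : T' ∩ ({d, e, f} : Finset V) = ({d, e, f} : Finset V)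
    · have hTsub : ({d, e, f} : Finset V) ⊆ T' := Finset.inter_eq_right.mp hEq
      have hT'T : ({d, e, f} : Finset V) = T' := by
        apply Finset.eq_of_subset_of_card_le hTsub
        rw [hΔ.card3 _ hT'Δ, hΔ.card3 _ htri]
      refine ⟨{a, b}, hpab, ?_, ?_⟩
      · rw [hT'T]; exact habT'
      · intro h
        rw [h, hΔ.card3 _ htri] at hcard2
        norm_num at hcard2
    · exact ⟨T' ∩ ({d, e, f} : Finset V), hpint, Finset.inter_subset_right, hEq⟩
  obtain ⟨v, hvT, hvS⟩ : ∃ v ∈ ({d, e, f} : Finset V), v ∉ Sf := by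
    by_contra h
    push_neg at h
    exact hSneT (Finset.Subset.antisymm hST h)
  have hsub3 : ψ '' (Sf : Set V) ⊆ tset \ {ψ v} := by
    rintro _ ⟨x, hx, rfl⟩
    have hxT : x ∈ ({d, e, f} : Finset V) := hST hx
    refine ⟨himT ▸ Set.mem_image_of_mem ψ hxT, ?_⟩
    intro hEq2
    simp only [Set.mem_singleton_iff] at hEq2
    exact hvS ((hinjT x hxT v hvT hEq2) ▸ hx)
  have hvtset : ψ v ∈ tset := himT ▸ Set.mem_image_of_mem ψ hvT
  exact relint_disjoint_face htind hvtset hp2 (convexHull_mono hsub3 hpS)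
end
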